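/- Let p ≥ 3 be a prime and n a positive integer, and suppose the elementary p-group (Z_p)^n has the periodic tiling (PT) property. Then for every tile Ω of (Z_p)^n there exists a subgroup T of (Z_p)^n such that (Ω, T) is a tiling pair; in other words, every tile is a complete set of representatives of the cosets of some subgroup. -/

import Mathlib

/-- `(Ω, T)` is a tiling pair of the abelian group `G`: every element of `G`
has a unique representation `ω + t` with `ω ∈ Ω`, `t ∈ T`. -/
def IsTilingPair {G : Type*} [AddCommGroup G] (Ω T : Set G) : Prop :=
  ∀ g : G, ∃! p : G × G, p.1 ∈ Ω ∧ p.2 ∈ T ∧ p.1 + p.2 = g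

/-- A nonempty subset `A` of `G` is periodic if `A + g = A` for some nonzero `g`. -/
def IsPeriodic {G : Type*} [AddCommGroup G] (A : Set G) : Prop :=
  A.Nonempty ∧ ∃ g : G, g ≠ 0 ∧ (fun a => a + g) '' A = A

/-- `Ω` is a tile of `G` if it has a tiling complement. -/
def IsTile {G : Type*} [AddCommGroup G] (Ω : Set G) : Prop :=
  ∃ T : Set G, IsTilingPair Ω T

/-- `G` has the periodic tiling (PT) property: for every tiling pair `(Ω, T)`,
either `Ω` is periodic, or `T` can be replaced by a periodic tiling complement. -/
def HasPT (G : Type*) [AddCommGroup G] : Prop :=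
  ∀ Ω T : Set G, IsTilingPair Ω T →
    IsPeriodic Ω ∨ ∃ T' : Set G, IsPeriodic T' ∧ IsTilingPair Ω T'

/-- A tile `Ω` is uniformly periodic if all its tiling complements share a
common nonzero period. -/
def UniformlyPeriodic {G : Type*} [AddCommGroup G] (Ω : Set G) : Prop :=
  ∃ g : G, g ≠ 0 ∧ ∀ T : Set G, IsTilingPair Ω T → (fun t => t + g) '' T = T

/-- A tile `Ω` is dual uniformly periodic if there is a periodic tile `Ω'`
which is a tiling complement of every tiling complement of `Ω`. -/
def DualUniformlyPeriodic {G : Type*} [AddCommGroup G] (Ω : Set G) : Prop :=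
  ∃ Ω' : Set G, IsPeriodic Ω' ∧ IsTile Ω' ∧
    ∀ T : Set G, IsTilingPair Ω T → IsTilingPair Ω' T

/-- `G` has the uniformly periodic tiling (UPT) property: every tile of `G`
is either uniformly periodic or dual uniformly periodic. -/
def HasUPT (G : Type*) [AddCommGroup G] : Prop :=
  ∀ Ω : Set G, IsTile Ω → UniformlyPeriodic Ω ∨ DualUniformlyPeriodic Ω

section InvtHelpers

variable {G : Type*} [AddCommGroup G]

/-- Two-sided invariance of a set under translation by `x`. -/
def Invt (A : Set G) (x : G) : Prop := ∀ g, g ∈ A ↔ g + x ∈ A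

theorem invt_of_image {A : Set G} {x : G} (h : (fun a => a + x) '' A = A) : Invt A x := by
  intro g
  constructor
  · intro hg
    rw [← h]
    exact ⟨g, hg, rfl⟩
  · intro hg
    rw [← h] at hg
    obtain ⟨a, ha, hax⟩ := hg
    have hag : a = g := add_right_cancel hax
    rwa [hag] at ha

theorem image_of_invt {A : Set G} {x : G} (h : Invt A x) : (fun a => a + x) '' A = A := by
  ext g
  constructor
  · rintro ⟨a, ha, rfl⟩
    exact (h a).1 ha
  · intro hg
    refine ⟨g - x, (h (g - x)).2 ?_, by simp⟩
    simpa using hg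

theorem invt_zero (A : Set G) : Invt A 0 := fun g => by simp

theorem invt_add {A : Set G} {x y : G} (hx : Invt A x) (hy : Invt A y) : Invt A (x + y) := by
  intro g
  rw [hx g, hy (g + x), add_assoc]

theorem invt_nsmul {A : Set G} {x : G} (hx : Invt A x) : ∀ k : ℕ, Invt A (k • x)
  | 0 => by simpa using invt_zero A
  | (k + 1) => by rw [succ_nsmul]; exact invt_add (invt_nsmul hx k) hx

theorem invt_span {p : ℕ} [NeZero p] [Module (ZMod p) G] {A : Set G} {h : G}
    (hA : Invt A h) : ∀ x ∈ Submodule.span (ZMod p) {h}, Invt A x := by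
  intro x hx
  obtain ⟨c, rfl⟩ := Submodule.mem_span_singleton.1 hx
  obtain ⟨k, rfl⟩ := ZMod.natCast_zmod_surjective (n := p) c
  rw [Nat.cast_smul_eq_nsmul]
  exact invt_nsmul hA k

theorem tilingPair_left_nonempty {Ω T : Set G} (h : IsTilingPair Ω T) : Ω.Nonempty := by
  obtain ⟨q, ⟨h1, -, -⟩, -⟩ := h 0
  exact ⟨q.1, h1⟩

theorem trivialCase {G : Type*} [AddCommGroup G] (hG : Subsingleton G)
    {Ω : Set G} (hΩ : IsTile Ω) : ∃ S : AddSubgroup G, IsTilingPair Ω (S : Set G) := by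
  obtain ⟨T, htil⟩ := hΩ
  refine ⟨⊥, fun g => ?_⟩
  obtain ⟨q, ⟨h1, h2, h3⟩, -⟩ := htil g
  refine ⟨q, ⟨h1, ?_, h3⟩, fun y _ => Subsingleton.elim y q⟩
  have : q.2 = 0 := Subsingleton.elim _ _
  simp [this]

end InvtHelpers

section CaseLemmas

variable {p : ℕ} {G : Type*} [AddCommGroup G] [Module (ZMod p) G]
variable {M H : Submodule (ZMod p) G}

theorem caseA
    (πM : G →+ M) (πH : G →+ H)
    (pMl : ∀ m : M, πM (m : G) = m) (pMr : ∀ b : H, πM (b : G) = 0)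
    (pHl : ∀ b : H, πH (b : G) = b) (pHr : ∀ m : M, πH (m : G) = 0)
    (recon : ∀ g : G, ((πM g : G) + (πH g : G)) = g)
    {Ω T : Set G} (htil : IsTilingPair Ω T)
    (hinvH : ∀ b : H, Invt Ω (b : G))
    (IHM : ∀ B : Set M, IsTile B → ∃ S : AddSubgroup M, IsTilingPair B (S : Set M)) :
    ∃ S : AddSubgroup G, IsTilingPair Ω (S : Set G) := by
  classical
  set B : Set M := {m : M | (m : G) ∈ Ω} with hBdef
  set C : Set M := (fun t => πM t) '' T with hCdef
  have hπMΩ : ∀ ω, ω ∈ Ω → ((πM ω : G) ∈ Ω) := by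
    intro ω hω
    have h1 : (πM ω : G) = ω + -((πH ω : G)) := by
      rw [eq_sub_of_add_eq (recon ω), sub_eq_add_neg]
    have h2 := (hinvH (-(πH ω)) ω).1 hω
    rw [h1]
    simpa using h2
  have hBC : IsTilingPair B C := by
    intro m
    obtain ⟨⟨ω, t⟩, ⟨hω, ht, hsum⟩, huniq⟩ := htil (m : G)
    have hBm : πM ω ∈ B := hπMΩ ω hω
    refine ⟨(πM ω, πM t), ⟨hBm, ⟨t, ht, rfl⟩, ?_⟩, ?_⟩
    · have h3 := congrArg πM hsum
      rwa [map_add, pMl m] at h3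
    · rintro ⟨b, c⟩ ⟨hb, hc, hbc⟩
      dsimp only at hb hc hbc
      obtain ⟨t', ht', hct'⟩ := hc
      have hct2 : πM t' = c := hct'
      have hb' : ((b : G) + ((-(πH t') : H) : G)) ∈ Ω := (hinvH _ _).1 hb
      have e1 : ((c : G)) + ((πH t' : G)) = t' := by rw [← hct2]; exact recon t'
      have e2 : ((b : G)) + ((c : G)) = (m : G) := by exact_mod_cast hbc
      have hsum' : ((b : G) + ((-(πH t') : H) : G)) + t' = (m : G) := by
        calc ((b : G) + ((-(πH t') : H) : G)) + t'
            = ((b : G) + ((-(πH t') : H) : G)) + ((c : G) + ((πH t' : G))) := by rw [e1]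
          _ = (b : G) + (c : G) := by push_cast; abel
          _ = (m : G) := e2
      have hpq := huniq ((b : G) + ((-(πH t') : H) : G), t') ⟨hb', ht', hsum'⟩
      have hfst : (b : G) + ((-(πH t') : H) : G) = ω := congrArg Prod.fst hpq
      have hsnd : t' = t := congrArg Prod.snd hpq
      have hb2 : πM ((b : G) + ((-(πH t') : H) : G)) = b := by
        rw [map_add, pMl, pMr, add_zero]
      refine Prod.ext ?_ ?_
      · show b = πM ω
        rw [← hfst]
        exact hb2.symm
      · show c = πM t
        rw [← hct2, hsnd]
  obtain ⟨S, hS⟩ := IHM B ⟨C, hBC⟩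
  refine ⟨S.map M.subtype.toAddMonoidHom, ?_⟩
  intro g
  obtain ⟨⟨b, s⟩, ⟨hb, hs, hsum⟩, huniq⟩ := hS (πM g)
  refine ⟨((b : G) + ((πH g : G)), (s : G)), ⟨?_, ?_, ?_⟩, ?_⟩
  · exact (hinvH (πH g) (b : G)).1 hb
  · exact AddSubgroup.mem_map.mpr ⟨s, hs, rfl⟩
  · have e2 : ((b : G)) + (s : G) = ((πM g : G)) := by exact_mod_cast hsum
    calc ((b : G) + (πH g : G)) + (s : G) = ((b : G) + (s : G)) + (πH g : G) := by abel
      _ = (πM g : G) + (πH g : G) := by rw [e2]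
      _ = g := recon g
  · rintro ⟨y, t⟩ ⟨hy, ht, hyt⟩
    dsimp only at hy ht hyt
    obtain ⟨s', hs', hts'⟩ := AddSubgroup.mem_map.mp ht
    have hts'' : (s' : G) = t := hts'
    have hπHy : πH y = πH g := by
      have h4 := congrArg πH hyt
      rwa [map_add, ← hts'', pHr s', add_zero] at h4
    have hyΩ : ((πM y : G)) ∈ Ω := hπMΩ y hy
    have hsum2 : πM y + s' = πM g := by
      have h5 := congrArg πM hyt
      rwa [map_add, ← hts'', pMl s'] at h5
    have hpq := huniq (πM y, s') ⟨hyΩ, hs', hsum2⟩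
    have h1 : πM y = b := congrArg Prod.fst hpq
    have h2 : s' = s := congrArg Prod.snd hpq
    refine Prod.ext ?_ ?_
    · show y = (b : G) + (πH g : G)
      rw [← recon y, h1, hπHy]
    · show t = (s : G)
      rw [← hts'', h2]

end CaseLemmas

section CaseB

variable {p : ℕ} {G : Type*} [AddCommGroup G] [Module (ZMod p) G]
variable {M H : Submodule (ZMod p) G}

theorem caseB
    (πM : G →+ M) (πH : G →+ H)
    (pMl : ∀ m : M, πM (m : G) = m) (pMr : ∀ b : H, πM (b : G) = 0)
    (pHl : ∀ b : H, πH (b : G) = b) (pHr : ∀ m : M, πH (m : G) = 0)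
    (recon : ∀ g : G, ((πM g : G) + (πH g : G)) = g)
    {Ω T' : Set G} (htil : IsTilingPair Ω T')
    (hinvH : ∀ b : H, Invt T' (b : G))
    (IHM : ∀ B : Set M, IsTile B → ∃ S : AddSubgroup M, IsTilingPair B (S : Set M)) :
    ∃ S : AddSubgroup G, IsTilingPair Ω (S : Set G) := by
  classical
  have hT'ne : T'.Nonempty := by
    obtain ⟨q, ⟨-, h2, -⟩, -⟩ := htil 0
    exact ⟨q.2, h2⟩
  have hinj : ∀ ω ∈ Ω, ∀ ω' ∈ Ω, πM ω = πM ω' → ω = ω' := by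
    intro ω hω ω' hω' he
    obtain ⟨t₀, ht₀⟩ := hT'ne
    have hδM : πM (ω - ω') = 0 := by rw [map_sub, he, sub_self]
    have hδ : ω - ω' = ((πH (ω - ω') : G)) := by
      have h0 := recon (ω - ω')
      rw [hδM] at h0
      simpa using h0.symm
    have ht₁ : t₀ + ((πH (ω - ω') : G)) ∈ T' := (hinvH _ t₀).1 ht₀
    obtain ⟨q, hq, huq⟩ := htil (ω + t₀)
    have h1 := huq (ω, t₀) ⟨hω, ht₀, rfl⟩
    have h2 := huq (ω', t₀ + ((πH (ω - ω') : G))) ⟨hω', ht₁, by rw [← hδ, add_comm t₀, ← add_assoc, add_sub_cancel]⟩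
    exact congrArg Prod.fst (h1.trans h2.symm)
  set Ωb : Set M := (fun x => πM x) '' Ω with hΩbdef
  set C : Set M := (fun x => πM x) '' T' with hCdef
  have hBC : IsTilingPair Ωb C := by
    intro m
    obtain ⟨⟨ω, t⟩, ⟨hω, ht, hsum⟩, huniq⟩ := htil (m : G)
    dsimp only at hω ht hsum
    refine ⟨(πM ω, πM t), ⟨⟨ω, hω, rfl⟩, ⟨t, ht, rfl⟩, ?_⟩, ?_⟩
    · have h3 := congrArg πM hsum
      rwa [map_add, pMl m] at h3
    · rintro ⟨b, c⟩ ⟨hb, hc, hbc⟩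
      dsimp only at hb hc hbc
      obtain ⟨ω', hω', hbω⟩ := hb
      obtain ⟨t', ht', hct⟩ := hc
      have hbω2 : πM ω' = b := hbω
      have hct2 : πM t' = c := hct
      set x : G := (m : G) - ω' - t' with hxdef
      have hxM : πM x = 0 := by
        rw [hxdef, map_sub, map_sub, pMl m, hbω2, hct2, ← hbc]
        abel
      have hxH : x = ((πH x : G)) := by
        have h0 := recon x
        rw [hxM] at h0
        simpa using h0.symm
      have ht'' : t' + ((πH x : G)) ∈ T' := (hinvH _ t').1 ht'
      have hsum'' : ω' + (t' + ((πH x : G))) = (m : G) := by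
        rw [← hxH, hxdef]
        abel
      have hpq := huniq (ω', t' + ((πH x : G))) ⟨hω', ht'', hsum''⟩
      have hfst : ω' = ω := congrArg Prod.fst hpq
      have hsnd : t' + ((πH x : G)) = t := congrArg Prod.snd hpq
      refine Prod.ext ?_ ?_
      · show b = πM ω
        rw [← hbω2, hfst]
      · show c = πM t
        rw [← hsnd, map_add, pMr, add_zero, hct2]
  obtain ⟨S, hS⟩ := IHM Ωb ⟨C, hBC⟩
  refine ⟨S.map M.subtype.toAddMonoidHom ⊔ H.toAddSubgroup, ?_⟩
  intro g
  obtain ⟨⟨b, s⟩, ⟨hb, hs, hsum⟩, huniq⟩ := hS (πM g)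
  dsimp only at hb hs hsum
  obtain ⟨ω₀, hω₀, hbω⟩ := hb
  have hbω2 : πM ω₀ = b := hbω
  have e2 : (b : G) + (s : G) = ((πM g : G)) := by exact_mod_cast hsum
  have key : g - ω₀ = (s : G) + ((πH g : G) - (πH ω₀ : G)) := by
    conv_lhs => rw [← recon g, ← recon ω₀]
    rw [← e2, hbω2]
    abel
  refine ⟨(ω₀, g - ω₀), ⟨hω₀, ?_, by show ω₀ + (g - ω₀) = g; abel⟩, ?_⟩
  · refine AddSubgroup.mem_sup.mpr ⟨(s : G), AddSubgroup.mem_map.mpr ⟨s, hs, rfl⟩,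
      ((πH g - πH ω₀ : H) : G), (Submodule.mem_toAddSubgroup H).mpr (πH g - πH ω₀).2, ?_⟩
    rw [key]
    push_cast
    abel
  · rintro ⟨y, t⟩ ⟨hy, ht, hyt⟩
    dsimp only at hy ht hyt
    obtain ⟨w, hw, z, hz, hwz⟩ := AddSubgroup.mem_sup.mp ht
    obtain ⟨s', hs', hws⟩ := AddSubgroup.mem_map.mp hw
    have hws2 : (s' : G) = w := hws
    have hzH : z ∈ H := (Submodule.mem_toAddSubgroup H).mp hz
    have hπMz : πM z = 0 := pMr ⟨z, hzH⟩
    have hπMt : πM t = s' := by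
      rw [← hwz, map_add, ← hws2, pMl s', hπMz, add_zero]
    have hdec : πM y + s' = πM g := by
      have h5 := congrArg πM hyt
      rwa [map_add, hπMt] at h5
    have hyb : πM y ∈ Ωb := ⟨y, hy, rfl⟩
    have hpq := huniq (πM y, s') ⟨hyb, hs', hdec⟩
    have h1 : πM y = b := congrArg Prod.fst hpq
    have hyω : y = ω₀ := hinj y hy ω₀ hω₀ (by rw [h1, hbω2])
    refine Prod.ext ?_ ?_
    · exact hyω
    · show t = g - ω₀
      rw [← hyω, ← hyt]
      abel

end CaseB

section Descent

variable {p : ℕ} {G : Type*} [AddCommGroup G] [Module (ZMod p) G] [Finite G]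
variable {M H : Submodule (ZMod p) G}

theorem descent (hp3 : 3 ≤ p)
    (πM : G →+ M) (πH : G →+ H)
    (pMl : ∀ m : M, πM (m : G) = m) (pMr : ∀ b : H, πM (b : G) = 0)
    (pHl : ∀ b : H, πH (b : G) = b) (pHr : ∀ m : M, πH (m : G) = 0)
    (recon : ∀ g : G, ((πM g : G) + (πH g : G)) = g)
    (hcardH : Nat.card H = p) (hMnt : Nontrivial M)
    (hPT : HasPT G) : HasPT M := by
  classical
  intro Ω T htil
  by_cases hper : IsPeriodic Ω
  · exact Or.inl hper
  right
  have hΩne : Ω.Nonempty := tilingPair_left_nonempty htil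
  obtain ⟨u, hu⟩ := exists_ne (0 : M)
  set vv : H → M := fun b => if b = 0 then 0 else u with hvvdef
  have hvv0 : vv 0 = 0 := if_pos rfl
  have hvvne : ∀ b : H, b ≠ 0 → vv b = u := fun b hb => if_neg hb
  set Ωh : Set G := {g : G | πM g - vv (πH g) ∈ Ω} with hΩhdef
  set Th : Set G := {g : G | πM g ∈ T ∧ πH g = 0} with hThdef
  have memOh : ∀ g : G, g ∈ Ωh ↔ πM g - vv (πH g) ∈ Ω := fun _ => Iff.rfl
  have compM : ∀ (m m' : M) (b : H), πM ((m : G) + (m' : G) + (b : G)) = m + m' := by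
    intro m m' b
    rw [map_add, map_add, pMl, pMl, pMr, add_zero]
  have compH : ∀ (m m' : M) (b : H), πH ((m : G) + (m' : G) + (b : G)) = b := by
    intro m m' b
    rw [map_add, map_add, pHr, pHr, pHl, zero_add, zero_add]
  -- (Ωh, Th) is a tiling pair of G
  have htilh : IsTilingPair Ωh Th := by
    intro g
    obtain ⟨⟨ω, τ⟩, ⟨hω, hτ, hsum⟩, huniq⟩ := htil (πM g - vv (πH g))
    dsimp only at hω hτ hsum
    refine ⟨(((ω : G) + (vv (πH g) : G)) + ((πH g : G)), (τ : G)), ⟨?_, ⟨?_, ?_⟩, ?_⟩, ?_⟩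
    · show πM _ - vv (πH _) ∈ Ω
      rw [compM, compH]
      simpa using hω
    · show πM ((τ : G)) ∈ T
      rw [pMl]
      exact hτ
    · exact pHr τ
    · have e2 : (ω : G) + (τ : G) = ((πM g : G)) - ((vv (πH g) : G)) := by
        exact_mod_cast congrArg (Subtype.val) hsum
      calc ((ω : G) + (vv (πH g) : G)) + (πH g : G) + (τ : G)
          = ((ω : G) + (τ : G)) + (vv (πH g) : G) + (πH g : G) := by abel
        _ = (πM g : G) + (πH g : G) := by rw [e2]; abel
        _ = g := recon g
    · rintro ⟨y, t⟩ ⟨hy, ⟨htT, htH⟩, hyt⟩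
      dsimp only at hy htT htH hyt
      have htc : t = ((πM t : G)) := by
        have h0 := recon t
        rw [htH] at h0
        simpa using h0.symm
      have hπHy : πH y = πH g := by
        have h4 := congrArg πH hyt
        rwa [map_add, htH, add_zero] at h4
      have hyΩ : πM y - vv (πH g) ∈ Ω := by
        rw [← hπHy]
        exact hy
      have hsum2 : (πM y - vv (πH g)) + πM t = πM g - vv (πH g) := by
        have h5 := congrArg πM hyt
        rw [map_add] at h5
        rw [sub_add_eq_add_sub, h5]
      have hpq := huniq (πM y - vv (πH g), πM t) ⟨hyΩ, htT, hsum2⟩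
      have h1 : πM y - vv (πH g) = ω := congrArg Prod.fst hpq
      have h2 : πM t = τ := congrArg Prod.snd hpq
      refine Prod.ext ?_ ?_
      · show y = (ω : G) + (vv (πH g) : G) + (πH g : G)
        rw [← recon y, hπHy, ← h1]
        push_cast
        abel
      · show t = (τ : G)
        rw [htc, h2]
  rcases hPT Ωh Th htilh with hperh | ⟨W, hWper, hWtil⟩
  · -- impossible: Ωh is not periodic
    exfalso
    obtain ⟨-, gg, hgg0, himg⟩ := hperh
    have hI : Invt Ωh gg := invt_of_image himg
    have hnot : ∀ w : M, Invt Ω w → w = 0 := by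
      intro w hw
      by_contra h0
      exact hper ⟨hΩne, w, h0, image_of_invt hw⟩
    have E1 : ∀ b : H, vv (b + πH gg) = vv b + πM gg := by
      intro b
      have key1 : ∀ m : M, (((m : G) + (vv b : G) + (b : G)) ∈ Ωh) ↔ m ∈ Ω := by
        intro m
        rw [memOh, compM, compH]
        simp
      have key2 : ∀ m : M, (((m : G) + (vv b : G) + (b : G) + gg) ∈ Ωh) ↔
          m + (vv b + πM gg - vv (b + πH gg)) ∈ Ω := by
        intro m
        rw [memOh, map_add, compM, map_add, compH]
        have eqx : m + vv b + πM gg - vv (b + πH gg) = m + (vv b + πM gg - vv (b + πH gg)) := by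
          abel
        rw [eqx]
      have hInv : Invt Ω (vv b + πM gg - vv (b + πH gg)) := by
        intro m
        exact ((key1 m).symm.trans (hI _)).trans (key2 m)
      have h0 := hnot _ hInv
      rw [sub_eq_zero] at h0
      exact h0.symm
    by_cases hgH : πH gg = 0
    · have h2 := E1 0
      rw [zero_add, hvv0, zero_add, hgH, hvv0] at h2
      have hgg : gg = 0 := by
        rw [← recon gg, hgH, ← h2]
        simp
      exact hgg0 hgg
    · have hcard3 : 3 ≤ Nat.card H := by rw [hcardH]; exact hp3
      obtain ⟨b₂, hb₂0, hb₂g⟩ : ∃ b₂ : H, b₂ ≠ 0 ∧ b₂ + πH gg ≠ 0 := by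
        by_contra hc
        push_neg at hc
        have hsub : (Set.univ : Set H) ⊆ {0, -πH gg} := by
          intro b _
          by_cases hb : b = 0
          · exact Or.inl hb
          · right
            have hb2 := hc b hb
            rwa [add_eq_zero_iff_eq_neg] at hb2
        have hle := Set.ncard_le_ncard hsub (Set.toFinite _)
        rw [Set.ncard_univ] at hle
        have h2 : ({0, -πH gg} : Set H).ncard ≤ 2 := by
          refine le_trans (Set.ncard_insert_le _ _) ?_
          simp [Set.ncard_singleton]
        omega
      have h3 := E1 b₂
      rw [hvvne b₂ hb₂0, hvvne _ hb₂g] at h3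
      have hgM : πM gg = 0 := by
        have h4 := h3.symm
        rwa [add_eq_left] at h4
      have h4 := E1 0
      rw [zero_add, hvv0, zero_add, hgM, hvvne _ hgH] at h4
      exact hu h4
  · -- extract a periodic complement of Ω in M from the periodic complement W
    obtain ⟨hWne, gw, hgw0, hWimg⟩ := hWper
    set P : M → Set (M × G) := fun x => {q | q.1 ∈ Ω ∧ q.2 ∈ W ∧ q.1 + πM q.2 = x} with hPdef
    have key : ∀ x : M, Nat.card (P x) + Nat.card (P (x - u)) * (p - 1) = p := by
      intro x
      set f : ((P x) ⊕ ((P (x - u)) × {b : H // b ≠ 0})) → H :=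
        fun s => Sum.elim (fun z => πH z.1.2) (fun zb => zb.2.1 + πH zb.1.1.2) s with hfdef
      set pr : ((P x) ⊕ ((P (x - u)) × {b : H // b ≠ 0})) → G × G :=
        fun s => Sum.elim (fun z => ((z.1.1 : G), z.1.2))
          (fun zb => ((zb.1.1.1 : G) + (u : G) + (zb.2.1 : G), zb.1.1.2)) s with hprdef
      have memOh1 : ∀ ω₁ : M, ω₁ ∈ Ω → ((ω₁ : G) ∈ Ωh) := by
        intro ω₁ h
        rw [memOh, pMl, pHr, hvv0, sub_zero]
        exact h
      have memOh2 : ∀ (ω₁ : M) (b : H), ω₁ ∈ Ω → b ≠ 0 →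
          ((ω₁ : G) + (u : G) + (b : G) ∈ Ωh) := by
        intro ω₁ b h hb
        rw [memOh, compM, compH, hvvne b hb]
        simpa using h
      have hsuml : ∀ (ω₁ : M) (w : G), ω₁ + πM w = x →
          (ω₁ : G) + w = (x : G) + ((πH w : G)) := by
        intro ω₁ w hxw
        conv_lhs => rw [← recon w]
        have e : (ω₁ : G) + (πM w : G) = (x : G) := by exact_mod_cast congrArg Subtype.val hxw
        rw [← e]
        abel
      have hsumr : ∀ (ω₁ : M) (b : H) (w : G), ω₁ + πM w = x - u →
          ((ω₁ : G) + (u : G) + (b : G)) + w = (x : G) + (((b + πH w : H)) : G) := by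
        intro ω₁ b w hxw
        conv_lhs => rw [← recon w]
        have e : (ω₁ : G) + (πM w : G) = (x : G) - (u : G) := by
          exact_mod_cast congrArg Subtype.val hxw
        push_cast
        calc (ω₁ : G) + (u : G) + (b : G) + ((πM w : G) + (πH w : G))
            = ((ω₁ : G) + (πM w : G)) + (u : G) + (b : G) + (πH w : G) := by abel
          _ = ((x : G) - (u : G)) + (u : G) + (b : G) + (πH w : G) := by rw [e]
          _ = (x : G) + ((b : G) + (πH w : G)) := by abel
      have hpr : ∀ s, (pr s).1 ∈ Ωh ∧ (pr s).2 ∈ W ∧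
          (pr s).1 + (pr s).2 = (x : G) + ((f s : G)) := by
        rintro (⟨⟨ω₁, w⟩, hω₁, hw, hxw⟩ | ⟨⟨⟨ω₁, w⟩, hω₁, hw, hxw⟩, b, hb⟩)
        · exact ⟨memOh1 ω₁ hω₁, hw, hsuml ω₁ w hxw⟩
        · exact ⟨memOh2 ω₁ b hω₁ hb, hw, hsumr ω₁ b w hxw⟩
      have hbij : Function.Bijective f := by
        constructor
        · intro s₁ s₂ hf
          obtain ⟨q0, hq0, huq⟩ := hWtil ((x : G) + ((f s₂ : G)))
          have h₁ := hpr s₁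
          rw [hf] at h₁
          have e₁ : pr s₁ = q0 := huq _ h₁
          have e₂ : pr s₂ = q0 := huq _ (hpr s₂)
          have e := e₁.trans e₂.symm
          cases s₁ with
          | inl z₁ =>
            cases s₂ with
            | inl z₂ =>
              simp only [hprdef, Sum.elim_inl, Sum.elim_inr, Prod.mk.injEq] at e
              obtain ⟨c1, c2⟩ := e
              apply congrArg Sum.inl
              apply Subtype.ext
              apply Prod.ext
              · exact_mod_cast c1
              · exact c2
            | inr zb₂ =>
              exfalso
              simp only [hprdef, Sum.elim_inl, Sum.elim_inr, Prod.mk.injEq] at e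
              obtain ⟨c1, -⟩ := e
              have c2 := congrArg πH c1
              rw [pHr, compH] at c2
              exact zb₂.2.2 c2.symm
          | inr zb₁ =>
            cases s₂ with
            | inl z₂ =>
              exfalso
              simp only [hprdef, Sum.elim_inl, Sum.elim_inr, Prod.mk.injEq] at e
              obtain ⟨c1, -⟩ := e
              have c2 := congrArg πH c1
              rw [pHr, compH] at c2
              exact zb₁.2.2 c2
            | inr zb₂ =>
              simp only [hprdef, Sum.elim_inl, Sum.elim_inr, Prod.mk.injEq] at e
              obtain ⟨c1, c2⟩ := e
              have hb : zb₁.2.1 = zb₂.2.1 := by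
                have c3 := congrArg πH c1
                rwa [compH, compH] at c3
              have hω : zb₁.1.1.1 = zb₂.1.1.1 := by
                have c4 := congrArg πM c1
                rw [compM, compM] at c4
                exact add_right_cancel c4
              apply congrArg Sum.inr
              apply Prod.ext
              · apply Subtype.ext
                apply Prod.ext
                · exact hω
                · exact c2
              · exact Subtype.ext hb
        · intro a
          obtain ⟨⟨y, w⟩, ⟨hy, hw, hsw⟩, -⟩ := hWtil ((x : G) + ((a : G)))
          dsimp only at hy hw hsw
          have hyM : πM y + πM w = x := by
            have h5 := congrArg πM hsw
            rwa [map_add, map_add, pMl, pMr, add_zero] at h5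
          have hyH : πH y + πH w = a := by
            have h5 := congrArg πH hsw
            rwa [map_add, map_add, pHr, pHl, zero_add] at h5
          by_cases hb : πH y = 0
          · have hω₁ : πM y ∈ Ω := by
              rw [memOh, hb, hvv0, sub_zero] at hy
              exact hy
            refine ⟨Sum.inl ⟨(πM y, w), ⟨hω₁, hw, hyM⟩⟩, ?_⟩
            show πH w = a
            rw [← hyH, hb, zero_add]
          · have hω₁ : πM y - vv (πH y) ∈ Ω := hy
            rw [hvvne _ hb] at hω₁
            have hsum3 : (πM y - u) + πM w = x - u := by
              rw [sub_add_eq_add_sub, hyM]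
            refine ⟨Sum.inr ⟨⟨(πM y - u, w), ⟨hω₁, hw, hsum3⟩⟩, ⟨πH y, hb⟩⟩, ?_⟩
            show πH y + πH w = a
            exact hyH
      have hc := Nat.card_eq_of_bijective f hbij
      have hcne : Nat.card {b : H // b ≠ (0 : H)} = p - 1 := by
        have h1 := Nat.card_congr (Equiv.optionSubtypeNe (0 : H))
        rw [Finite.card_option, hcardH] at h1
        omega
      rw [Nat.card_sum, Nat.card_prod, hcne, hcardH] at hc
      exact hc
    have hb1 : ∀ y : M, Nat.card (P y) ≤ 1 := by
      intro y
      by_contra hge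
      push_neg at hge
      have hk := key (y + u)
      rw [add_sub_cancel_right] at hk
      set a := Nat.card (P y) * (p - 1) with hadef
      have h2 : 2 * (p - 1) ≤ a := by
        rw [hadef]
        exact Nat.mul_le_mul_right _ hge
      omega
    have hA1 : ∀ y : M, Nat.card (P y) = 1 := by
      intro y
      have hk := key (y + u)
      rw [add_sub_cancel_right] at hk
      have h1 := hb1 y
      have h2 := hb1 (y + u)
      rcases Nat.le_one_iff_eq_zero_or_eq_one.mp h1 with h0 | h1'
      · rw [h0, Nat.zero_mul, add_zero] at hk
        omega
      · exact h1'
    have hUnique : ∀ y : M, ∃ q0 : M × G, P y = {q0} := by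
      intro y
      have h1 := hA1 y
      rw [Nat.card_coe_set_eq, Set.ncard_eq_one] at h1
      exact h1
    have hWinj : ∀ w₁ ∈ W, ∀ w₂ ∈ W, πM w₁ = πM w₂ → w₁ = w₂ := by
      intro w₁ hw₁ w₂ hw₂ he
      obtain ⟨ω₀, hω₀⟩ := hΩne
      obtain ⟨q0, hq0⟩ := hUnique (ω₀ + πM w₁)
      have m1 : ((ω₀, w₁) : M × G) ∈ P (ω₀ + πM w₁) := ⟨hω₀, hw₁, rfl⟩
      have m2 : ((ω₀, w₂) : M × G) ∈ P (ω₀ + πM w₁) := ⟨hω₀, hw₂, by rw [← he]⟩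
      rw [hq0, Set.mem_singleton_iff] at m1 m2
      exact congrArg Prod.snd (m1.trans m2.symm)
    set W' : Set M := (fun w => πM w) '' W with hW'def
    have htilW' : IsTilingPair Ω W' := by
      intro m
      obtain ⟨q0, hq0⟩ := hUnique m
      have hq0m : q0 ∈ P m := by
        rw [hq0]
        exact Set.mem_singleton _
      obtain ⟨hq1, hq2, hq3⟩ := hq0m
      refine ⟨(q0.1, πM q0.2), ⟨hq1, ⟨q0.2, hq2, rfl⟩, hq3⟩, ?_⟩
      rintro ⟨b, c⟩ ⟨hb, hc, hbc⟩
      dsimp only at hb hc hbc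
      obtain ⟨w, hw, hcw⟩ := hc
      have hcw2 : πM w = c := hcw
      have hmem : ((b, w) : M × G) ∈ P m := ⟨hb, hw, by rw [hcw2]; exact hbc⟩
      rw [hq0, Set.mem_singleton_iff] at hmem
      refine Prod.ext ?_ ?_
      · show b = q0.1
        rw [← hmem]
      · show c = πM q0.2
        rw [← hmem, hcw2]
    have hIW : Invt W gw := invt_of_image hWimg
    have hgM0 : πM gw ≠ 0 := by
      intro h0
      obtain ⟨w₀, hw₀⟩ := hWne
      have hw₁ : w₀ + gw ∈ W := (hIW w₀).1 hw₀
      have he : πM (w₀ + gw) = πM w₀ := by rw [map_add, h0, add_zero]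
      have he2 := hWinj _ hw₁ _ hw₀ he
      have : gw = 0 := by
        have := he2
        rwa [add_eq_left] at this
      exact hgw0 this
    have hIW' : Invt W' (πM gw) := by
      intro c
      constructor
      · rintro ⟨w, hw, rfl⟩
        refine ⟨w + gw, (hIW w).1 hw, ?_⟩
        show πM (w + gw) = πM w + πM gw
        rw [map_add]
      · rintro ⟨w, hw, hcw⟩
        have hcw2 : πM w = c + πM gw := hcw
        have hwg : w - gw ∈ W := (hIW (w - gw)).2 (by simpa using hw)
        refine ⟨w - gw, hwg, ?_⟩
        show πM (w - gw) = c
        rw [map_sub, hcw2]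
        simp
    have hW'ne : W'.Nonempty := hWne.image _
    exact ⟨W', ⟨hW'ne, πM gw, hgM0, image_of_invt hIW'⟩, htilW'⟩

end Descent

theorem aux_tile (p : ℕ) (hp : p.Prime) (hp3 : 3 ≤ p) :
    ∀ (N : ℕ) (G : Type) [AddCommGroup G] [Module (ZMod p) G] [Finite G],
      Nat.card G ≤ N → HasPT G → ∀ Ω : Set G, IsTile Ω →
      ∃ S : AddSubgroup G, IsTilingPair Ω (S : Set G) := by
  haveI : Fact p.Prime := ⟨hp⟩
  haveI : NeZero p := ⟨hp.ne_zero⟩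
  intro N
  induction N using Nat.strong_induction_on with
  | _ N IH =>
    intro G _ _ _ hcard hPT Ω hΩ
    by_cases hsub : Subsingleton G
    · exact trivialCase hsub hΩ
    obtain ⟨T, htil⟩ := hΩ
    have main : ∀ H : Submodule (ZMod p) G, Nat.card H = p →
        ((∀ x ∈ H, Invt Ω x) ∨
          (∃ T' : Set G, IsTilingPair Ω T' ∧ ∀ x ∈ H, Invt T' x)) →
        ∃ S : AddSubgroup G, IsTilingPair Ω (S : Set G) := by
      intro H hcardH hcases
      obtain ⟨M, hHM⟩ := Submodule.exists_isCompl H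
      have hMH : IsCompl M H := hHM.symm
      have hcardmul : Nat.card M * Nat.card H = Nat.card G := by
        have e := Nat.card_congr (Submodule.prodEquivOfIsCompl M H hMH).toEquiv
        rwa [Nat.card_prod] at e
      have hMpos : 0 < Nat.card M := Nat.card_pos
      have hcardM_lt : Nat.card M < Nat.card G := by
        rw [← hcardmul, hcardH]
        calc Nat.card M = Nat.card M * 1 := (mul_one _).symm
          _ < Nat.card M * p := by
              have h1 : 1 < p := by omega
              exact mul_lt_mul_of_pos_left h1 hMpos
      have IHM : ∀ B : Set M, IsTile B → ∃ S : AddSubgroup M, IsTilingPair B (S : Set M) := by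
        by_cases hMsub : Subsingleton M
        · exact fun B hB => trivialCase hMsub hB
        · have hMnt : Nontrivial M := not_subsingleton_iff_nontrivial.mp hMsub
          have hPTM : HasPT M :=
            descent hp3 (M.projectionOnto H hMH).toAddMonoidHom
              (H.projectionOnto M hMH.symm).toAddMonoidHom
              (fun m => Submodule.projectionOnto_apply_left hMH m)
              (fun b => Submodule.projectionOnto_apply_right hMH b)
              (fun b => Submodule.projectionOnto_apply_left hMH.symm b)
              (fun m => Submodule.projectionOnto_apply_right hMH.symm m)
              (fun g => Submodule.projection_add_projection_eq_self hMH g)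
              hcardH hMnt hPT
          exact fun B hB => IH (Nat.card M) (lt_of_lt_of_le hcardM_lt hcard) M le_rfl hPTM B hB
      rcases hcases with hA | ⟨T', htil', hB⟩
      · exact caseA (M.projectionOnto H hMH).toAddMonoidHom
          (H.projectionOnto M hMH.symm).toAddMonoidHom
          (fun m => Submodule.projectionOnto_apply_left hMH m)
          (fun b => Submodule.projectionOnto_apply_right hMH b)
          (fun b => Submodule.projectionOnto_apply_left hMH.symm b)
          (fun m => Submodule.projectionOnto_apply_right hMH.symm m)
          (fun g => Submodule.projection_add_projection_eq_self hMH g)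
          htil (fun b => hA (b : G) b.2) IHM
      · exact caseB (M.projectionOnto H hMH).toAddMonoidHom
          (H.projectionOnto M hMH.symm).toAddMonoidHom
          (fun m => Submodule.projectionOnto_apply_left hMH m)
          (fun b => Submodule.projectionOnto_apply_right hMH b)
          (fun b => Submodule.projectionOnto_apply_left hMH.symm b)
          (fun m => Submodule.projectionOnto_apply_right hMH.symm m)
          (fun g => Submodule.projection_add_projection_eq_self hMH g)
          htil' (fun b => hB (b : G) b.2) IHM
    have spanCard : ∀ h : G, h ≠ 0 → Nat.card (Submodule.span (ZMod p) {h}) = p := by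
      intro h hh0
      have hhH : h ∈ Submodule.span (ZMod p) {h} := Submodule.mem_span_singleton_self h
      have hbij : Function.Bijective
          (fun c : ZMod p =>
            (⟨c • h, Submodule.smul_mem _ c hhH⟩ : Submodule.span (ZMod p) {h})) := by
        constructor
        · intro c d hcd
          have h1 : c • h = d • h := congrArg Subtype.val hcd
          have h2 : (c - d) • h = 0 := by rw [sub_smul, h1, sub_self]
          rcases smul_eq_zero.mp h2 with h3 | h3
          · exact sub_eq_zero.mp h3
          · exact absurd h3 hh0
        · rintro ⟨x, hx⟩
          obtain ⟨c, hc⟩ := Submodule.mem_span_singleton.1 hx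
          exact ⟨c, Subtype.ext hc⟩
      rw [← Nat.card_congr (Equiv.ofBijective _ hbij), Nat.card_zmod]
    rcases hPT Ω T htil with hper | ⟨T', hT'per, htil'⟩
    · obtain ⟨hne, h, hh0, himg⟩ := hper
      exact main (Submodule.span (ZMod p) {h}) (spanCard h hh0)
        (Or.inl (invt_span (invt_of_image himg)))
    · obtain ⟨hne', h, hh0, himg⟩ := hT'per
      exact main (Submodule.span (ZMod p) {h}) (spanCard h hh0)
        (Or.inr ⟨T', htil', invt_span (invt_of_image himg)⟩)

/-- In an elementary `p`-group (`p ≥ 3`) with the PT property, every tile has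
a subgroup as a tiling complement. -/
theorem tile_compl_subgroup_of_hasPT (p : ℕ) (hp : p.Prime) (hp3 : 3 ≤ p)
    (n : ℕ) (hn : 1 ≤ n) (hPT : HasPT (Fin n → ZMod p))
    (Ω : Set (Fin n → ZMod p)) (hΩ : IsTile Ω) :
    ∃ T : AddSubgroup (Fin n → ZMod p), IsTilingPair Ω (T : Set (Fin n → ZMod p)) := by
  haveI : NeZero p := ⟨hp.ne_zero⟩
  exact aux_tile p hp hp3 (Nat.card (Fin n → ZMod p)) (Fin n → ZMod p) le_rfl hPT Ω hΩ
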